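/- For all natural numbers n > 1, the sum over k from 1 to n of (-1)^k·C(n,k)·k·H_k² equals 1/(1-n)·(H_n - (n²+3n-2)/(n(n-1))). -/

import Mathlib

open Finset BigOperators

def H (n : ℕ) : ℚ := ∑ i ∈ Finset.range n, 1 / (i + 1 : ℚ)

def H2 (n : ℕ) : ℚ := ∑ i ∈ Finset.range n, 1 / ((i + 1 : ℚ))^2

def Alt (f : ℕ → ℚ) (n : ℕ) : ℚ := ∑ k ∈ Finset.range (n+1), (-1:ℚ)^k * (n.choose k) * f k

lemma Alt_step (f : ℕ → ℚ) (n : ℕ) :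
    Alt f (n+1) = -∑ k ∈ Finset.range (n+1), (-1:ℚ)^k * (n.choose k) * (f (k+1) - f k) := by
  have h1 : Alt f (n+1)
      = ∑ k ∈ Finset.range (n+1), (-1:ℚ)^(k+1) * (((n+1).choose (k+1) : ℕ)) * f (k+1) + f 0 := by
    rw [Alt, Finset.sum_range_succ' (fun k => (-1:ℚ)^k * ((n+1).choose k) * f k) (n+1)]
    simp
  have h2 : ∀ k, ((-1:ℚ))^(k+1) * (((n+1).choose (k+1) : ℕ)) * f (k+1)
      = (-1:ℚ)^(k+1) * (n.choose k) * f (k+1) + (-1:ℚ)^(k+1) * (n.choose (k+1)) * f (k+1) := by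
    intro k
    rw [Nat.choose_succ_succ]
    push_cast
    ring
  rw [h1]
  simp only [h2, Finset.sum_add_distrib]
  have h3 : ∑ k ∈ Finset.range (n+1), (-1:ℚ)^(k+1) * (n.choose (k+1)) * f (k+1)
      = Alt f n - f 0 := by
    rw [Alt]
    rw [Finset.sum_range_succ' (fun k => (-1:ℚ)^k * (n.choose k) * f k) n]
    have : ∑ k ∈ Finset.range (n+1), (-1:ℚ)^(k+1) * (n.choose (k+1)) * f (k+1)
        = ∑ k ∈ Finset.range n, (-1:ℚ)^(k+1) * (n.choose (k+1)) * f (k+1) := by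
      rw [Finset.sum_range_succ]
      simp
    rw [this]
    simp
  rw [h3, Alt]
  have h4 : ∑ x ∈ Finset.range (n+1), -((-1:ℚ)^x * (n.choose x) * (f (x+1) - f x))
      = ∑ x ∈ Finset.range (n+1), ((-1:ℚ)^(x+1) * (n.choose x) * f (x+1) + (-1:ℚ)^x * (n.choose x) * f x) := by
    apply Finset.sum_congr rfl
    intro k _
    ring
  rw [← Finset.sum_neg_distrib, h4, Finset.sum_add_distrib]
  ring

lemma choose_cast (n k : ℕ) : ((n:ℚ)+1) * (n.choose k) = ((k:ℚ)+1) * ((n+1).choose (k+1)) := by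
  have h : (n+1) * n.choose k = (n+1).choose (k+1) * (k+1) := Nat.add_one_mul_choose_eq n k
  have h2 := congrArg (Nat.cast : ℕ → ℚ) h
  push_cast at h2
  linear_combination h2

lemma T0 (n : ℕ) : Alt (fun _ => (1:ℚ)) (n+1) = 0 := by
  rw [Alt_step]; simp

lemma altC (n : ℕ) : ∑ k ∈ Finset.range (n+1), (-1:ℚ)^k * ((n+1).choose (k+1)) = 1 := by
  have h := T0 n
  rw [Alt, Finset.sum_range_succ' (fun k => (-1:ℚ)^k * ((n+1).choose k) * 1) (n+1)] at h
  simp only [mul_one, pow_succ, Nat.choose_zero_right, Nat.cast_one, one_mul, pow_zero] at h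
  have : ∑ k ∈ Finset.range (n+1), (-1:ℚ)^k * ((n+1).choose (k+1))
      = -∑ k ∈ Finset.range (n+1), (-1:ℚ)^k * -1 * ((n+1).choose (k+1)) := by
    rw [← Finset.sum_neg_distrib]; apply Finset.sum_congr rfl; intros; ring
  rw [this]
  linarith [h]

lemma T1 (n : ℕ) : Alt (fun k => 1/((k:ℚ)+1)) n = 1/((n:ℚ)+1) := by
  have hn : ((n:ℚ)+1) ≠ 0 := by positivity
  have : Alt (fun k => 1/((k:ℚ)+1)) n
      = ∑ k ∈ Finset.range (n+1), (1/((n:ℚ)+1)) * ((-1:ℚ)^k * ((n+1).choose (k+1))) := by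
    rw [Alt]
    apply Finset.sum_congr rfl
    intro k _
    have hk : ((k:ℚ)+1) ≠ 0 := by positivity
    have hc := choose_cast n k
    field_simp
    linear_combination hc
  rw [this, ← Finset.mul_sum, altC]
  ring

lemma Hsucc (n : ℕ) : H (n+1) = H n + 1/((n:ℚ)+1) := by
  rw [H, Finset.sum_range_succ, ← H]

lemma Msum (n : ℕ) : ∑ k ∈ Finset.range n, (-1:ℚ)^(k+1) * (n.choose (k+1)) * (1/((k:ℚ)+1)) = -H n := by
  induction n with
  | zero => simp [H]
  | succ n ih =>
    have hsplit : ∀ k, (-1:ℚ)^(k+1) * (((n+1).choose (k+1) : ℕ)) * (1/((k:ℚ)+1))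
        = (-1:ℚ)^(k+1) * (n.choose k) * (1/((k:ℚ)+1))
          + (-1:ℚ)^(k+1) * (n.choose (k+1)) * (1/((k:ℚ)+1)) := by
      intro k; rw [Nat.choose_succ_succ]; push_cast; ring
    rw [Finset.sum_congr rfl (fun k _ => hsplit k), Finset.sum_add_distrib]
    have h1 : ∑ k ∈ Finset.range (n+1), (-1:ℚ)^(k+1) * (n.choose k) * (1/((k:ℚ)+1))
        = -(1/((n:ℚ)+1)) := by
      have hT := T1 n
      rw [Alt] at hT
      have : ∑ k ∈ Finset.range (n+1), (-1:ℚ)^(k+1) * (n.choose k) * (1/((k:ℚ)+1))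
          = -∑ k ∈ Finset.range (n+1), (-1:ℚ)^k * (n.choose k) * (1/((k:ℚ)+1)) := by
        rw [← Finset.sum_neg_distrib]; apply Finset.sum_congr rfl; intros; ring
      rw [this, hT]
    have h2 : ∑ k ∈ Finset.range (n+1), (-1:ℚ)^(k+1) * (n.choose (k+1)) * (1/((k:ℚ)+1))
        = -H n := by
      rw [Finset.sum_range_succ]
      simp only [Nat.choose_succ_self, Nat.cast_zero, mul_zero, zero_mul, add_zero]
      exact ih
    rw [h1, h2, Hsucc]
    ring

lemma Esum (n : ℕ) : Alt (fun k => 1/(((k:ℚ)+1))^2) n = H (n+1)/((n:ℚ)+1) := by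
  have hM := Msum (n+1)
  have : Alt (fun k => 1/(((k:ℚ)+1))^2) n
      = ∑ k ∈ Finset.range (n+1), (-(1/((n:ℚ)+1))) * ((-1:ℚ)^(k+1) * ((n+1).choose (k+1)) * (1/((k:ℚ)+1))) := by
    rw [Alt]
    apply Finset.sum_congr rfl
    intro k _
    have hk : ((k:ℚ)+1) ≠ 0 := by positivity
    have hn : ((n:ℚ)+1) ≠ 0 := by positivity
    have hc := choose_cast n k
    have hc' : (((n+1).choose (k+1) : ℕ) : ℚ) = ((n:ℚ)+1) * (n.choose k) / ((k:ℚ)+1) := by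
      rw [eq_div_iff hk]; linarith [hc]
    rw [hc']
    field_simp
    ring
  rw [this, ← Finset.mul_sum, hM]
  ring

lemma AH (n : ℕ) : Alt H (n+1) = -(1/((n:ℚ)+1)) := by
  rw [Alt_step]
  have : ∑ k ∈ Finset.range (n+1), (-1:ℚ)^k * (n.choose k) * (H (k+1) - H k)
      = ∑ k ∈ Finset.range (n+1), (-1:ℚ)^k * (n.choose k) * (1/((k:ℚ)+1)) := by
    apply Finset.sum_congr rfl
    intro k _
    rw [Hsucc]; ring
  rw [this]
  have hT := T1 n
  rw [Alt] at hT
  rw [hT]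

lemma Dsum (n : ℕ) : Alt (fun k => H k * (1/((k:ℚ)+1))) n
    = 1/((n:ℚ)+1)^2 - H (n+1)/((n:ℚ)+1) := by
  have hn : ((n:ℚ)+1) ≠ 0 := by positivity
  have hP : ∑ k ∈ Finset.range (n+1), (-1:ℚ)^k * ((n+1).choose (k+1)) * H (k+1)
      = 1/((n:ℚ)+1) := by
    have hA := AH n
    rw [Alt, Finset.sum_range_succ' (fun k => (-1:ℚ)^k * ((n+1).choose k) * H k) (n+1)] at hA
    simp only [Nat.choose_zero_right, Nat.cast_one, pow_zero, one_mul] at hA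
    rw [show H 0 = 0 from by simp [H], add_zero] at hA
    have : ∑ k ∈ Finset.range (n+1), (-1:ℚ)^k * ((n+1).choose (k+1)) * H (k+1)
        = -∑ k ∈ Finset.range (n+1), (-1:ℚ)^(k+1) * ((n+1).choose (k+1)) * H (k+1) := by
      rw [← Finset.sum_neg_distrib]; apply Finset.sum_congr rfl; intros; ring
    rw [this]
    linarith [hA]
  have hQ : ∑ k ∈ Finset.range (n+1), (-1:ℚ)^k * ((n+1).choose (k+1)) * (1/((k:ℚ)+1))
      = H (n+1) := by
    have hM := Msum (n+1)
    have : ∑ k ∈ Finset.range (n+1), (-1:ℚ)^k * ((n+1).choose (k+1)) * (1/((k:ℚ)+1))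
        = -∑ k ∈ Finset.range (n+1), (-1:ℚ)^(k+1) * ((n+1).choose (k+1)) * (1/((k:ℚ)+1)) := by
      rw [← Finset.sum_neg_distrib]; apply Finset.sum_congr rfl; intros; ring
    rw [this, hM]
    ring
  have hmain : Alt (fun k => H k * (1/((k:ℚ)+1))) n
      = ∑ k ∈ Finset.range (n+1), (1/((n:ℚ)+1)) *
          ((-1:ℚ)^k * ((n+1).choose (k+1)) * H (k+1)
            - (-1:ℚ)^k * ((n+1).choose (k+1)) * (1/((k:ℚ)+1))) := by
    rw [Alt]
    apply Finset.sum_congr rfl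
    intro k _
    have hk : ((k:ℚ)+1) ≠ 0 := by positivity
    have hc := choose_cast n k
    have hc' : (((n+1).choose (k+1) : ℕ) : ℚ) = ((n:ℚ)+1) * (n.choose k) / ((k:ℚ)+1) := by
      rw [eq_div_iff hk]; linarith [hc]
    have hn' : ((n:ℚ)+1) ≠ 0 := by positivity
    rw [Hsucc, hc']
    field_simp
    ring
  rw [hmain, ← Finset.mul_sum, Finset.sum_sub_distrib, hP, hQ]
  field_simp

lemma Bsum (n : ℕ) : Alt (fun k => H k^2) (n+1) = H (n+1)/((n:ℚ)+1) - 2/((n:ℚ)+1)^2 := by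
  rw [Alt_step]
  have : ∑ k ∈ Finset.range (n+1), (-1:ℚ)^k * (n.choose k) * (H (k+1)^2 - H k^2)
      = ∑ k ∈ Finset.range (n+1), (2 * ((-1:ℚ)^k * (n.choose k) * (H k * (1/((k:ℚ)+1))))
          + (-1:ℚ)^k * (n.choose k) * (1/(((k:ℚ)+1))^2)) := by
    apply Finset.sum_congr rfl
    intro k _
    rw [Hsucc]
    have hk : ((k:ℚ)+1) ≠ 0 := by positivity
    field_simp
    ring
  rw [this, Finset.sum_add_distrib, ← Finset.mul_sum]
  have hD := Dsum n
  have hE := Esum n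
  rw [Alt] at hD hE
  rw [hD, hE]
  field_simp
  ring

lemma Ssum (n : ℕ) : Alt (fun k => (k:ℚ) * H k^2) (n+2)
    = -H (n+1)/((n:ℚ)+1) + 2/((n:ℚ)+1)^2 + 2/((n:ℚ)+1) - 1/((n:ℚ)+2) := by
  rw [Alt_step]
  have : ∑ k ∈ Finset.range (n+2), (-1:ℚ)^k * ((n+1).choose k) * (((k:ℚ)+1) * H (k+1)^2 - (k:ℚ) * H k^2)
      = ∑ k ∈ Finset.range (n+2), ((-1:ℚ)^k * ((n+1).choose k) * (H k^2)
          + 2 * ((-1:ℚ)^k * ((n+1).choose k) * H k)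
          + (-1:ℚ)^k * ((n+1).choose k) * (1/((k:ℚ)+1))) := by
    apply Finset.sum_congr rfl
    intro k _
    rw [Hsucc]
    have hk : ((k:ℚ)+1) ≠ 0 := by positivity
    field_simp
    ring
  push_cast
  rw [this, Finset.sum_add_distrib, Finset.sum_add_distrib, ← Finset.mul_sum]
  have hB := Bsum n
  have hA := AH n
  have hT := T1 (n+1)
  rw [Alt] at hB hA hT
  simp only [show n+1+1 = n+2 from rfl] at hB hA hT
  push_cast at hB hA hT
  rw [hB, hA, hT]
  have h1 : ((n:ℚ)+1) ≠ 0 := by positivity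
  have h2 : ((n:ℚ)+2) ≠ 0 := by positivity
  field_simp
  ring


theorem stmt18 (n : ℕ) (hn : 1 < n) :
    ∑ k ∈ Finset.Icc 1 n, (-1 : ℚ)^k * (n.choose k : ℚ) * k * H k^2
      = 1 / (1 - (n : ℚ)) * (H n - ((n : ℚ)^2 + 3 * n - 2) / (n * ((n : ℚ) - 1))) := by
  obtain ⟨m, rfl⟩ : ∃ m, n = m + 2 := ⟨n - 2, by omega⟩
  have hL : ∑ k ∈ Finset.Icc 1 (m+2), (-1 : ℚ)^k * ((m+2).choose k : ℚ) * k * H k^2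
      = Alt (fun k => (k:ℚ) * H k^2) (m+2) := by
    rw [Alt, Finset.sum_range_succ' (fun k => (-1:ℚ)^k * (((m+2).choose k : ℕ):ℚ) * ((k:ℚ) * H k^2)) (m+2)]
    rw [← Finset.Ico_add_one_right_eq_Icc, Finset.sum_Ico_eq_sum_range]
    simp only [Nat.cast_zero, zero_mul, mul_zero, add_zero, Nat.succ_sub_one]
    apply Finset.sum_congr rfl
    intro i _
    rw [add_comm 1 i]
    ring
  rw [hL, Ssum m]
  have h2 : H (m+2) = H (m+1) + 1/((m:ℚ)+2) := by
    rw [show m+2 = (m+1)+1 from rfl, Hsucc]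
    push_cast
    ring
  push_cast
  rw [h2]
  have e1 : ((m:ℚ)+1) ≠ 0 := by positivity
  have e2 : ((m:ℚ)+2) ≠ 0 := by positivity
  have e3 : (1:ℚ) - ((m:ℚ)+2) ≠ 0 := by intro h; nlinarith [Nat.cast_nonneg (α := ℚ) m]
  have e4 : ((m:ℚ)+2) - 1 ≠ 0 := by intro h; nlinarith [Nat.cast_nonneg (α := ℚ) m]
  field_simp
  ring
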